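/- arXiv:2210.11971 — 2 statements merged into one kernel-verified Lean document; each statement's English description precedes it below -/
import Mathlib

section
/- Let X, U_hat, U be square-integrable random vectors and h, g measurable functions such that h(X), g(U_hat), g(U) are square-integrable random vectors in R^n, with g(U) uncorrelated with both h(X) and g(U_hat), and with Cov(g(U_hat)) + Cov(g(U)) invertible. Define Z = h(X) - S(g(U_hat) - g(U)) for a matrix S in R^{n×n}. Then the trace of Cov(Z) is minimized over S by S* = Cov(h(X), g(U_hat)) (Cov(g(U_hat)) + Cov(g(U)))^{-1}. -/
open MeasureTheory Matrix

/-- Cross-covariance matrix of two random vectors. -/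
noncomputable def cov {Ω : Type*} [MeasurableSpace Ω] (μ : Measure Ω)
    {a b : Type*} [Fintype a] [Fintype b]
    (A : Ω → a → ℝ) (B : Ω → b → ℝ) : Matrix a b ℝ :=
  Matrix.of fun i j =>
    ∫ ω, (A ω i - ∫ ω', A ω' i ∂μ) * (B ω j - ∫ ω', B ω' j ∂μ) ∂μ

lemma integrable_mul_of_L2 {Ω : Type*} [MeasurableSpace Ω] {μ : Measure Ω}
    {f g : Ω → ℝ} (hf : MemLp f 2 μ) (hg : MemLp g 2 μ) :
    Integrable (fun ω => f ω * g ω) μ := by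
  have := hg.smul (r := 1) hf
  exact memLp_one_iff_integrable.mp this

lemma memLp_component {Ω : Type*} [MeasurableSpace Ω] {μ : Measure Ω} {n : ℕ}
    {f : Ω → Fin n → ℝ} (hf : MemLp f 2 μ) (i : Fin n) :
    MemLp (fun ω => f ω i) 2 μ := by
  have := (ContinuousLinearMap.proj (R := ℝ) (φ := fun _ : Fin n => ℝ) i).comp_memLp' hf
  exact this

lemma core_step {Ω : Type*} [MeasurableSpace Ω] {μ : Measure Ω} {n : ℕ}
    (Hc : Ω → ℝ) (Dc : Fin n → Ω → ℝ)
    (hH : MemLp Hc 2 μ) (hD : ∀ j, MemLp (Dc j) 2 μ)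
    (T T₀ : Fin n → ℝ)
    (horth : ∀ j, ∫ ω, (Hc ω - ∑ k, T₀ k * Dc k ω) * Dc j ω ∂μ = 0) :
    ∫ ω, (Hc ω - ∑ j, T₀ j * Dc j ω)^2 ∂μ ≤ ∫ ω, (Hc ω - ∑ j, T j * Dc j ω)^2 ∂μ := by
  have hL : ∀ T : Fin n → ℝ, MemLp (fun ω => ∑ j, T j * Dc j ω) 2 μ := by
    intro T
    have h2 := memLp_finset_sum' (μ := μ) (p := 2) Finset.univ
      (f := fun j ω => T j * Dc j ω) (fun j _ => (hD j).const_mul (T j))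
    have h3 : (∑ j : Fin n, fun ω => T j * Dc j ω) = fun ω => ∑ j : Fin n, T j * Dc j ω := by
      ext ω; simp
    rwa [h3] at h2
  have hR : MemLp (fun ω => Hc ω - ∑ k, T₀ k * Dc k ω) 2 μ := hH.sub (hL T₀)
  have hE : MemLp (fun ω => (∑ k, T₀ k * Dc k ω) - ∑ k, T k * Dc k ω) 2 μ := (hL T₀).sub (hL T)
  have hcross : ∫ ω, (Hc ω - ∑ k, T₀ k * Dc k ω) * ((∑ k, T₀ k * Dc k ω) - ∑ k, T k * Dc k ω) ∂μ = 0 := by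
    have hpt : ∀ ω, (Hc ω - ∑ k, T₀ k * Dc k ω) * ((∑ k, T₀ k * Dc k ω) - ∑ k, T k * Dc k ω)
        = ∑ j, (T₀ j - T j) * ((Hc ω - ∑ k, T₀ k * Dc k ω) * Dc j ω) := by
      intro ω
      rw [← Finset.sum_sub_distrib, Finset.mul_sum]
      exact Finset.sum_congr rfl fun j _ => by ring
    simp_rw [hpt]
    rw [integral_finset_sum _ (fun j _ => ((integrable_mul_of_L2 hR (hD j)).const_mul _))]
    simp [integral_const_mul, horth]
  have hpt2 : ∀ ω, (Hc ω - ∑ j, T j * Dc j ω)^2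
      = ((Hc ω - ∑ j, T₀ j * Dc j ω)^2
        + ((∑ k, T₀ k * Dc k ω) - ∑ k, T k * Dc k ω)^2)
        + 2 * ((Hc ω - ∑ k, T₀ k * Dc k ω) * ((∑ k, T₀ k * Dc k ω) - ∑ k, T k * Dc k ω)) := by
    intro ω; ring
  calc ∫ ω, (Hc ω - ∑ j, T₀ j * Dc j ω)^2 ∂μ
      ≤ (∫ ω, (Hc ω - ∑ j, T₀ j * Dc j ω)^2 ∂μ)
        + ∫ ω, ((∑ k, T₀ k * Dc k ω) - ∑ k, T k * Dc k ω)^2 ∂μ :=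
        le_add_of_nonneg_right (integral_nonneg fun ω => sq_nonneg _)
    _ = ∫ ω, (Hc ω - ∑ j, T j * Dc j ω)^2 ∂μ := by
        simp_rw [hpt2]
        have i1 : Integrable (fun ω => (Hc ω - ∑ j, T₀ j * Dc j ω)^2) μ := hR.integrable_sq
        have i2 : Integrable (fun ω => ((∑ k, T₀ k * Dc k ω) - ∑ k, T k * Dc k ω)^2) μ :=
          hE.integrable_sq
        have i3 : Integrable (fun ω => (Hc ω - ∑ j, T₀ j * Dc j ω)^2
            + ((∑ k, T₀ k * Dc k ω) - ∑ k, T k * Dc k ω)^2) μ := i1.add i2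
        have i4 : Integrable (fun ω => 2 * ((Hc ω - ∑ k, T₀ k * Dc k ω)
            * ((∑ k, T₀ k * Dc k ω) - ∑ k, T k * Dc k ω))) μ :=
          (integrable_mul_of_L2 hR hE).const_mul 2
        rw [integral_add i3 i4, integral_add i1 i2, integral_const_mul, hcross]
        ring

lemma core {Ω : Type*} [MeasurableSpace Ω] {μ : Measure Ω} {n : ℕ}
    (Hc Ac Bc : Fin n → Ω → ℝ)
    (hH : ∀ i, MemLp (Hc i) 2 μ) (hA : ∀ i, MemLp (Ac i) 2 μ) (hB : ∀ i, MemLp (Bc i) 2 μ)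
    (hBH : ∀ j i, ∫ ω, Bc j ω * Hc i ω ∂μ = 0)
    (hBA : ∀ j k, ∫ ω, Bc j ω * Ac k ω ∂μ = 0)
    (S S₀ : Matrix (Fin n) (Fin n) ℝ)
    (hS₀ : ∀ i j, ∑ k, S₀ i k * ((∫ ω, Ac k ω * Ac j ω ∂μ) + ∫ ω, Bc k ω * Bc j ω ∂μ)
      = ∫ ω, Hc i ω * Ac j ω ∂μ) :
    ∑ i, ∫ ω, (Hc i ω - ∑ j, S₀ i j * (Ac j ω - Bc j ω))^2 ∂μ
      ≤ ∑ i, ∫ ω, (Hc i ω - ∑ j, S i j * (Ac j ω - Bc j ω))^2 ∂μ := by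
  have hD : ∀ j, MemLp (fun ω => Ac j ω - Bc j ω) 2 μ := fun j => (hA j).sub (hB j)
  have hDD : ∀ k j, ∫ ω, (Ac k ω - Bc k ω) * (Ac j ω - Bc j ω) ∂μ
      = (∫ ω, Ac k ω * Ac j ω ∂μ) + ∫ ω, Bc k ω * Bc j ω ∂μ := by
    intro k j
    have hpt : ∀ ω, (Ac k ω - Bc k ω) * (Ac j ω - Bc j ω)
        = (Ac k ω * Ac j ω + Bc k ω * Bc j ω) - (Bc j ω * Ac k ω + Bc k ω * Ac j ω) :=
      fun ω => by ring
    simp_rw [hpt]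
    have i1 : Integrable (fun ω => Ac k ω * Ac j ω + Bc k ω * Bc j ω) μ :=
      (integrable_mul_of_L2 (hA k) (hA j)).add (integrable_mul_of_L2 (hB k) (hB j))
    have i2 : Integrable (fun ω => Bc j ω * Ac k ω + Bc k ω * Ac j ω) μ :=
      (integrable_mul_of_L2 (hB j) (hA k)).add (integrable_mul_of_L2 (hB k) (hA j))
    rw [integral_sub i1 i2,
      integral_add (integrable_mul_of_L2 (hA k) (hA j)) (integrable_mul_of_L2 (hB k) (hB j)),
      integral_add (integrable_mul_of_L2 (hB j) (hA k)) (integrable_mul_of_L2 (hB k) (hA j)),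
      hBA j k, hBA k j]
    ring
  have hHD : ∀ i j, ∫ ω, Hc i ω * (Ac j ω - Bc j ω) ∂μ = ∫ ω, Hc i ω * Ac j ω ∂μ := by
    intro i j
    have hpt : ∀ ω, Hc i ω * (Ac j ω - Bc j ω) = Hc i ω * Ac j ω - Bc j ω * Hc i ω :=
      fun ω => by ring
    simp_rw [hpt]
    rw [integral_sub (integrable_mul_of_L2 (hH i) (hA j)) (integrable_mul_of_L2 (hB j) (hH i)),
      hBH j i, sub_zero]
  refine Finset.sum_le_sum fun i _ => ?_
  refine core_step (Hc i) (fun j ω => Ac j ω - Bc j ω) (hH i) hD (S i) (S₀ i) ?_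
  intro j
  have hpt : ∀ ω, (Hc i ω - ∑ k, S₀ i k * (Ac k ω - Bc k ω)) * (Ac j ω - Bc j ω)
      = Hc i ω * (Ac j ω - Bc j ω)
        - ∑ k, S₀ i k * ((Ac k ω - Bc k ω) * (Ac j ω - Bc j ω)) := by
    intro ω
    rw [sub_mul, Finset.sum_mul]
    congr 1
    exact Finset.sum_congr rfl fun k _ => by ring
  simp_rw [hpt]
  rw [integral_sub (integrable_mul_of_L2 (hH i) (hD j))
      (integrable_finset_sum _ (fun k _ => (integrable_mul_of_L2 (hD k) (hD j)).const_mul _)),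
    integral_finset_sum _ (fun k _ => (integrable_mul_of_L2 (hD k) (hD j)).const_mul _)]
  simp_rw [integral_const_mul, hDD, hHD]
  rw [hS₀ i j, sub_self]

/-- The optimal gain minimizing the trace generalized variance of
`Z = h(X) - S (g(U_hat) - g(U))` is
`S* = Cov(h X, g U_hat) (Cov(g U_hat) + Cov(g U))⁻¹`. -/
theorem optimal_gain {Ω α β : Type*} [MeasurableSpace Ω] [MeasurableSpace α] [MeasurableSpace β]
    (μ : Measure Ω) [IsProbabilityMeasure μ] {n : ℕ}
    (X : Ω → α) (Uhat U : Ω → β) (h : α → Fin n → ℝ) (g : β → Fin n → ℝ)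
    (hXm : Measurable X) (hUhatm : Measurable Uhat) (hUm : Measurable U)
    (hm : Measurable h) (gm : Measurable g)
    (hL2 : MemLp (fun ω => h (X ω)) 2 μ)
    (hUhatL2 : MemLp (fun ω => g (Uhat ω)) 2 μ)
    (hUL2 : MemLp (fun ω => g (U ω)) 2 μ)
    (huncor1 : cov μ (fun ω => g (U ω)) (fun ω => h (X ω)) = 0)
    (huncor2 : cov μ (fun ω => g (U ω)) (fun ω => g (Uhat ω)) = 0)
    (hinv : IsUnit (cov μ (fun ω => g (Uhat ω)) (fun ω => g (Uhat ω)) +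
      cov μ (fun ω => g (U ω)) (fun ω => g (U ω))))
    (Z : Matrix (Fin n) (Fin n) ℝ → Ω → Fin n → ℝ)
    (hZ : ∀ S ω, Z S ω = h (X ω) - S.mulVec (g (Uhat ω) - g (U ω)))
    (Sopt : Matrix (Fin n) (Fin n) ℝ)
    (hSopt : Sopt = cov μ (fun ω => h (X ω)) (fun ω => g (Uhat ω)) *
      (cov μ (fun ω => g (Uhat ω)) (fun ω => g (Uhat ω)) +
        cov μ (fun ω => g (U ω)) (fun ω => g (U ω)))⁻¹) :
    ∀ S : Matrix (Fin n) (Fin n) ℝ,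
      (cov μ (Z Sopt) (Z Sopt)).trace ≤ (cov μ (Z S) (Z S)).trace := by
  intro S
  have hH2 : ∀ i, MemLp (fun ω => h (X ω) i) 2 μ := fun i => memLp_component hL2 i
  have hA2 : ∀ j, MemLp (fun ω => g (Uhat ω) j) 2 μ := fun j => memLp_component hUhatL2 j
  have hB2 : ∀ j, MemLp (fun ω => g (U ω) j) 2 μ := fun j => memLp_component hUL2 j
  have hHc : ∀ i, MemLp (fun ω => h (X ω) i - ∫ ω', h (X ω') i ∂μ) 2 μ :=
    fun i => (hH2 i).sub (memLp_const _)
  have hAc : ∀ j, MemLp (fun ω => g (Uhat ω) j - ∫ ω', g (Uhat ω') j ∂μ) 2 μ :=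
    fun j => (hA2 j).sub (memLp_const _)
  have hBc : ∀ j, MemLp (fun ω => g (U ω) j - ∫ ω', g (U ω') j ∂μ) 2 μ :=
    fun j => (hB2 j).sub (memLp_const _)
  -- uncorrelatedness, entrywise
  have hBH : ∀ j i, ∫ ω, (g (U ω) j - ∫ ω', g (U ω') j ∂μ)
      * (h (X ω) i - ∫ ω', h (X ω') i ∂μ) ∂μ = 0 :=
    fun j i => congrFun (congrFun huncor1 j) i
  have hBA : ∀ j k, ∫ ω, (g (U ω) j - ∫ ω', g (U ω') j ∂μ)
      * (g (Uhat ω) k - ∫ ω', g (Uhat ω') k ∂μ) ∂μ = 0 :=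
    fun j k => congrFun (congrFun huncor2 j) k
  -- the normal equation satisfied by Sopt
  have hdet : IsUnit (cov μ (fun ω => g (Uhat ω)) (fun ω => g (Uhat ω)) +
      cov μ (fun ω => g (U ω)) (fun ω => g (U ω))).det :=
    (Matrix.isUnit_iff_isUnit_det _).mp hinv
  have hSC : Sopt * (cov μ (fun ω => g (Uhat ω)) (fun ω => g (Uhat ω)) +
      cov μ (fun ω => g (U ω)) (fun ω => g (U ω)))
      = cov μ (fun ω => h (X ω)) (fun ω => g (Uhat ω)) := by
    rw [hSopt, Matrix.mul_assoc, Matrix.nonsing_inv_mul _ hdet, Matrix.mul_one]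
  have hS₀ : ∀ i j, ∑ k, Sopt i k *
      ((∫ ω, (g (Uhat ω) k - ∫ ω', g (Uhat ω') k ∂μ) * (g (Uhat ω) j - ∫ ω', g (Uhat ω') j ∂μ) ∂μ)
        + ∫ ω, (g (U ω) k - ∫ ω', g (U ω') k ∂μ) * (g (U ω) j - ∫ ω', g (U ω') j ∂μ) ∂μ)
      = ∫ ω, (h (X ω) i - ∫ ω', h (X ω') i ∂μ) * (g (Uhat ω) j - ∫ ω', g (Uhat ω') j ∂μ) ∂μ := by
    intro i j
    have e := congrFun (congrFun hSC i) j
    rw [Matrix.mul_apply] at e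
    exact e
  -- trace formula
  have htrace : ∀ S' : Matrix (Fin n) (Fin n) ℝ,
      (cov μ (Z S') (Z S')).trace
        = ∑ i, ∫ ω, ((h (X ω) i - ∫ ω', h (X ω') i ∂μ)
            - ∑ j, S' i j * ((g (Uhat ω) j - ∫ ω', g (Uhat ω') j ∂μ)
              - (g (U ω) j - ∫ ω', g (U ω') j ∂μ)))^2 ∂μ := by
    intro S'
    rw [Matrix.trace]
    refine Finset.sum_congr rfl fun i _ => ?_
    have hZi : ∀ ω, Z S' ω i = h (X ω) i - ∑ j, S' i j * (g (Uhat ω) j - g (U ω) j) := by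
      intro ω; rw [hZ]; simp [Matrix.mulVec, dotProduct]
    have hintj : ∀ j : Fin n, Integrable (fun ω => S' i j * (g (Uhat ω) j - g (U ω) j)) μ :=
      fun j => (((hA2 j).integrable one_le_two).sub ((hB2 j).integrable one_le_two)).const_mul _
    have hint2 : Integrable (fun ω => ∑ j, S' i j * (g (Uhat ω) j - g (U ω) j)) μ :=
      integrable_finset_sum _ fun j _ => hintj j
    have hmean : ∫ ω, Z S' ω i ∂μ
        = (∫ ω, h (X ω) i ∂μ)
          - ∑ j, S' i j * ((∫ ω, g (Uhat ω) j ∂μ) - ∫ ω, g (U ω) j ∂μ) := by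
      simp_rw [hZi]
      rw [integral_sub ((hH2 i).integrable one_le_two) hint2,
        integral_finset_sum _ fun j _ => hintj j]
      congr 1
      refine Finset.sum_congr rfl fun j _ => ?_
      rw [integral_const_mul,
        integral_sub ((hA2 j).integrable one_le_two) ((hB2 j).integrable one_le_two)]
    show ∫ ω, (Z S' ω i - ∫ ω', Z S' ω' i ∂μ) * (Z S' ω i - ∫ ω', Z S' ω' i ∂μ) ∂μ = _
    rw [hmean]
    refine integral_congr_ae (Filter.Eventually.of_forall fun ω => ?_)
    simp only [hZi]
    have hsum : ∑ j, S' i j * ((g (Uhat ω) j - ∫ ω', g (Uhat ω') j ∂μ)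
          - (g (U ω) j - ∫ ω', g (U ω') j ∂μ))
        = (∑ j, S' i j * (g (Uhat ω) j - g (U ω) j))
          - ∑ j, S' i j * ((∫ ω', g (Uhat ω') j ∂μ) - ∫ ω', g (U ω') j ∂μ) := by
      rw [← Finset.sum_sub_distrib]
      exact Finset.sum_congr rfl fun j _ => by ring
    rw [hsum]
    ring
  rw [htrace S, htrace Sopt]
  exact core (fun i ω => h (X ω) i - ∫ ω', h (X ω') i ∂μ)
    (fun j ω => g (Uhat ω) j - ∫ ω', g (Uhat ω') j ∂μ)
    (fun j ω => g (U ω) j - ∫ ω', g (U ω') j ∂μ)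
    hHc hAc hBc hBH hBA S Sopt hS₀
end

section
/- Let X be a square-integrable random vector in R^n, and for m = 1,...,M let V_m = g_m(U_hat_m) and W_m = g_m(U_m) be square-integrable R^n-valued random vectors such that each W_m is uncorrelated with X, with all V_{m'}, and with W_{m'} for m' ≠ m. Define Z = h(X) - Σ_m S_m (V_m - W_m). Then gains (S_1,...,S_M) minimize tr(Cov(Z)) if and only if for each m: Σ_{m'} S_{m'} Cov(V_{m'}, V_m) + S_m Cov(W_m) = Cov(h(X), V_m); equivalently, the row vector of gains times the M×M block matrix with diagonal blocks Cov(V_m)+Cov(W_m) and off-diagonal blocks Cov(V_{m'}, V_m) equals the row of cross-covariances Cov(h(X), V_m). -/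
open MeasureTheory Matrix Finset

set_option linter.unusedSectionVars false
set_option linter.unusedVariables false
section ScalarCov

variable {Ω : Type*} [MeasurableSpace Ω] {μ : Measure Ω} [IsProbabilityMeasure μ]

noncomputable def cs (μ : Measure Ω) (f g : Ω → ℝ) : ℝ :=
  ∫ ω, (f ω - ∫ ω', f ω' ∂μ) * (g ω - ∫ ω', g ω' ∂μ) ∂μ

lemma cs_comm (f g : Ω → ℝ) : cs μ f g = cs μ g f := by
  unfold cs; congr 1; funext ω; ring

lemma integrable_center_mul {f g : Ω → ℝ} (hf : MemLp f 2 μ) (hg : MemLp g 2 μ) :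
    Integrable (fun ω => (f ω - ∫ ω', f ω' ∂μ) * (g ω - ∫ ω', g ω' ∂μ)) μ := by
  have hf' : MemLp (fun ω => f ω - ∫ ω', f ω' ∂μ) 2 μ := hf.sub (memLp_const _)
  have hg' : MemLp (fun ω => g ω - ∫ ω', g ω' ∂μ) 2 μ := hg.sub (memLp_const _)
  rw [← memLp_one_iff_integrable]
  have := hg'.smul (r := 1) hf' (hpqr := ⟨by simp [ENNReal.inv_two_add_inv_two]⟩)
  exact this

lemma cs_nonneg (f : Ω → ℝ) : 0 ≤ cs μ f f :=
  integral_nonneg fun ω => mul_self_nonneg _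

lemma cs_zero_left (g : Ω → ℝ) : cs μ (fun _ => (0 : ℝ)) g = 0 := by
  simp [cs]

lemma cs_smul_left (a : ℝ) (f g : Ω → ℝ) :
    cs μ (fun ω => a * f ω) g = a * cs μ f g := by
  unfold cs
  rw [integral_const_mul]
  have : (fun ω => (a * f ω - a * ∫ ω', f ω' ∂μ) * (g ω - ∫ ω', g ω' ∂μ))
      = fun ω => a * ((f ω - ∫ ω', f ω' ∂μ) * (g ω - ∫ ω', g ω' ∂μ)) := by
    funext ω; ring
  rw [this, integral_const_mul]

lemma cs_neg_left (f g : Ω → ℝ) :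
    cs μ (fun ω => -f ω) g = -cs μ f g := by
  have : (fun ω => -f ω) = fun ω => (-1 : ℝ) * f ω := by funext ω; ring
  rw [this, cs_smul_left]; ring

lemma cs_add_left {f₁ f₂ g : Ω → ℝ} (h1 : MemLp f₁ 2 μ) (h2 : MemLp f₂ 2 μ)
    (hg : MemLp g 2 μ) :
    cs μ (fun ω => f₁ ω + f₂ ω) g = cs μ f₁ g + cs μ f₂ g := by
  have hi : ∫ ω, (f₁ ω + f₂ ω) ∂μ = (∫ ω, f₁ ω ∂μ) + ∫ ω, f₂ ω ∂μ :=
    integral_add (h1.integrable one_le_two) (h2.integrable one_le_two)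
  unfold cs
  rw [hi]
  have : (fun ω => (f₁ ω + f₂ ω - ((∫ ω', f₁ ω' ∂μ) + ∫ ω', f₂ ω' ∂μ)) *
        (g ω - ∫ ω', g ω' ∂μ))
      = fun ω => (f₁ ω - ∫ ω', f₁ ω' ∂μ) * (g ω - ∫ ω', g ω' ∂μ)
        + (f₂ ω - ∫ ω', f₂ ω' ∂μ) * (g ω - ∫ ω', g ω' ∂μ) := by
    funext ω; ring
  rw [this, integral_add (integrable_center_mul h1 hg) (integrable_center_mul h2 hg)]

lemma cs_sub_left {f₁ f₂ g : Ω → ℝ} (h1 : MemLp f₁ 2 μ) (h2 : MemLp f₂ 2 μ)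
    (hg : MemLp g 2 μ) :
    cs μ (fun ω => f₁ ω - f₂ ω) g = cs μ f₁ g - cs μ f₂ g := by
  have he : (fun ω => f₁ ω - f₂ ω) = fun ω => f₁ ω + (-f₂ ω) := by funext ω; ring
  have h2' : MemLp (fun ω => -f₂ ω) 2 μ := h2.neg
  rw [he, cs_add_left h1 h2' hg, cs_neg_left]; ring

lemma cs_sum_left {κ : Type*} (s : Finset κ) (F : κ → Ω → ℝ) {g : Ω → ℝ}
    (hF : ∀ k ∈ s, MemLp (F k) 2 μ) (hg : MemLp g 2 μ) :
    cs μ (fun ω => ∑ k ∈ s, F k ω) g = ∑ k ∈ s, cs μ (F k) g := by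
  induction s using Finset.cons_induction with
  | empty => simpa using cs_zero_left (μ := μ) g
  | cons k s hk ih =>
    have hfe : (fun ω => ∑ k' ∈ Finset.cons k s hk, F k' ω)
        = fun ω => F k ω + ∑ k' ∈ s, F k' ω := by
      funext ω; exact Finset.sum_cons hk
    have hsum : MemLp (fun ω => ∑ k' ∈ s, F k' ω) 2 μ :=
      memLp_finset_sum s fun k' hk' => hF k' (Finset.mem_cons_of_mem hk')
    rw [hfe, cs_add_left (hF k (Finset.mem_cons_self k s)) hsum hg,
      ih (fun k' hk' => hF k' (Finset.mem_cons_of_mem hk')), Finset.sum_cons]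

end ScalarCov

section MatrixCov

variable {Ω : Type*} [MeasurableSpace Ω] {μ : Measure Ω} [IsProbabilityMeasure μ]
variable {a b c : Type*} [Fintype a] [Fintype b] [Fintype c]

lemma cov_apply (A : Ω → a → ℝ) (B : Ω → b → ℝ) (i : a) (j : b) :
    cov μ A B i j = cs μ (fun ω => A ω i) (fun ω => B ω j) := rfl

/-- componentwise L² -/
def L2v (μ : Measure Ω) (A : Ω → a → ℝ) : Prop := ∀ i, MemLp (fun ω => A ω i) 2 μ

lemma MeasureTheory.MemLp.l2v {n : ℕ} {A : Ω → Fin n → ℝ} (hA : MemLp A 2 μ) : L2v μ A := by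
  intro i
  exact (ContinuousLinearMap.proj (R := ℝ) (φ := fun _ : Fin n => ℝ) i).comp_memLp' hA

lemma cov_transpose (A : Ω → a → ℝ) (B : Ω → b → ℝ) :
    (cov μ A B)ᵀ = cov μ B A := by
  ext i j
  rw [Matrix.transpose_apply, cov_apply, cov_apply, cs_comm]

lemma cov_sub_left {A B : Ω → a → ℝ} {C : Ω → b → ℝ}
    (hA : L2v μ A) (hB : L2v μ B) (hC : L2v μ C) :
    cov μ (fun ω => A ω - B ω) C = cov μ A C - cov μ B C := by
  ext i j
  rw [Matrix.sub_apply, cov_apply, cov_apply, cov_apply]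
  exact cs_sub_left (hA i) (hB i) (hC j)

lemma cov_sub_right {A : Ω → a → ℝ} {B C : Ω → b → ℝ}
    (hA : L2v μ A) (hB : L2v μ B) (hC : L2v μ C) :
    cov μ A (fun ω => B ω - C ω) = cov μ A B - cov μ A C := by
  rw [← cov_transpose, cov_sub_left hB hC hA, Matrix.transpose_sub, cov_transpose,
    cov_transpose]

lemma cov_sum_left {κ : Type*} (s : Finset κ) (F : κ → Ω → a → ℝ) {C : Ω → b → ℝ}
    (hF : ∀ k ∈ s, L2v μ (F k)) (hC : L2v μ C) :
    cov μ (fun ω => ∑ k ∈ s, F k ω) C = ∑ k ∈ s, cov μ (F k) C := by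
  ext i j
  rw [Matrix.sum_apply, cov_apply]
  have he : (fun ω => (∑ k ∈ s, F k ω) i) = fun ω => ∑ k ∈ s, F k ω i := by
    funext ω; exact Finset.sum_apply i s _
  rw [he, cs_sum_left s _ (fun k hk => hF k hk i) (hC j)]
  exact Finset.sum_congr rfl fun k _ => (cov_apply _ _ _ _).symm

lemma cov_sum_right {κ : Type*} (s : Finset κ) (F : κ → Ω → b → ℝ) {A : Ω → a → ℝ}
    (hF : ∀ k ∈ s, L2v μ (F k)) (hA : L2v μ A) :
    cov μ A (fun ω => ∑ k ∈ s, F k ω) = ∑ k ∈ s, cov μ A (F k) := by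
  rw [← cov_transpose, cov_sum_left s F hF hA, Matrix.transpose_sum]
  exact Finset.sum_congr rfl fun k _ => cov_transpose _ _

lemma cov_mulVec_left (T : Matrix c a ℝ) {A : Ω → a → ℝ} {C : Ω → b → ℝ}
    (hA : L2v μ A) (hC : L2v μ C) :
    cov μ (fun ω => T.mulVec (A ω)) C = T * cov μ A C := by
  ext i j
  rw [Matrix.mul_apply, cov_apply]
  have he : (fun ω => T.mulVec (A ω) i) = fun ω => ∑ k, T i k * A ω k := by
    funext ω; simp [Matrix.mulVec, dotProduct]
  rw [he, cs_sum_left Finset.univ (fun k ω => T i k * A ω k)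
    (fun k _ => (hA k).const_mul (T i k)) (hC j)]
  exact Finset.sum_congr rfl fun k _ => by rw [cs_smul_left, cov_apply]

lemma cov_mulVec_right (T : Matrix c b ℝ) {A : Ω → a → ℝ} {C : Ω → b → ℝ}
    (hA : L2v μ A) (hC : L2v μ C) :
    cov μ A (fun ω => T.mulVec (C ω)) = cov μ A C * Tᵀ := by
  rw [← cov_transpose, cov_mulVec_left T hC hA, Matrix.transpose_mul, cov_transpose]

lemma cov_smul_smul (t : ℝ) (A : Ω → a → ℝ) :
    cov μ (fun ω => t • A ω) (fun ω => t • A ω) = (t * t) • cov μ A A := by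
  ext i j
  rw [Matrix.smul_apply, cov_apply, cov_apply]
  have he : ∀ (u : Ω → a → ℝ) (i : a), (fun ω => (t • u ω) i) = fun ω => t * u ω i := by
    intro u i; funext ω; simp
  rw [he, he, cs_smul_left]
  rw [show (fun ω => A ω i) = fun ω => A ω i from rfl]
  have : cs μ (fun ω => A ω i) (fun ω => t * A ω j)
      = t * cs μ (fun ω => A ω i) (fun ω => A ω j) := by
    rw [cs_comm, cs_smul_left, cs_comm]
  rw [this, smul_eq_mul]; ring

lemma trace_cov_nonneg (A : Ω → a → ℝ) : 0 ≤ (cov μ A A).trace := by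
  rw [Matrix.trace]
  exact Finset.sum_nonneg fun i _ => cs_nonneg _

lemma matrix_eq_zero_of_trace_mul_transpose {R : Matrix a a ℝ}
    (h : (R * Rᵀ).trace = 0) : R = 0 := by
  have hexp : (R * Rᵀ).trace = ∑ i, ∑ j, R i j ^ 2 := by
    simp [Matrix.trace, Matrix.diag, Matrix.mul_apply, sq]
  rw [hexp] at h
  ext i j
  have h1 := (Finset.sum_eq_zero_iff_of_nonneg
    (fun i _ => Finset.sum_nonneg fun j _ => sq_nonneg (R i j))).mp h i (Finset.mem_univ i)
  have h2 := (Finset.sum_eq_zero_iff_of_nonneg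
    (fun j _ => sq_nonneg (R i j))).mp h1 j (Finset.mem_univ j)
  exact pow_eq_zero_iff (by norm_num) |>.mp h2

lemma trace_mul_transpose_nonneg (R : Matrix a a ℝ) : 0 ≤ (R * Rᵀ).trace := by
  have hexp : (R * Rᵀ).trace = ∑ i, ∑ j, R i j ^ 2 := by
    simp [Matrix.trace, Matrix.diag, Matrix.mul_apply, sq]
  rw [hexp]
  exact Finset.sum_nonneg fun i _ => Finset.sum_nonneg fun j _ => sq_nonneg _

lemma quad_coeff_zero {cq q : ℝ} (hq : 0 ≤ q)
    (H : ∀ t : ℝ, 0 ≤ t ^ 2 * q - 2 * t * cq) : cq = 0 := by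
  rcases eq_or_lt_of_le hq with hq0 | hqpos
  · have := H cq
    nlinarith [sq_nonneg cq]
  · have h1 := H (cq / q)
    have hq' : q ≠ 0 := ne_of_gt hqpos
    have he : (cq / q) ^ 2 * q - 2 * (cq / q) * cq = -(cq ^ 2) / q := by
      field_simp; ring
    rw [he] at h1
    have h2 : (0:ℝ) ≤ -(cq ^ 2) := by
      have := mul_nonneg h1 (le_of_lt hqpos)
      rwa [div_mul_cancel₀ _ hq'] at this
    nlinarith [sq_nonneg cq]

end MatrixCov

/-- multi-control-variate optimal gain condition.  With
`Z S = h(X) - Σ_m S_m (V_m - W_m)`, the gains `(S_1,…,S_M)` minimize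
`tr Cov(Z)` iff for every `m`:
`Σ_{m'} S_{m'} Cov(V_{m'}, V_m) + S_m Cov(W_m) = Cov(h(X), V_m)`. -/
theorem multi_control_variate_optimal_gain {Ω α : Type*} {M : ℕ} {β : Fin M → Type*}
    [MeasurableSpace Ω] (μ : Measure Ω) [IsProbabilityMeasure μ] {n : ℕ}
    (X : Ω → α) (h : α → Fin n → ℝ)
    (Uhat U : ∀ m : Fin M, Ω → β m) (g : ∀ m : Fin M, β m → Fin n → ℝ)
    (V W : Fin M → Ω → Fin n → ℝ)
    (hV : ∀ m ω, V m ω = g m (Uhat m ω)) (hW : ∀ m ω, W m ω = g m (U m ω))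
    (hL2 : MemLp (fun ω => h (X ω)) 2 μ)
    (hVL2 : ∀ m, MemLp (V m) 2 μ) (hWL2 : ∀ m, MemLp (W m) 2 μ)
    (hWX : ∀ m, cov μ (W m) (fun ω => h (X ω)) = 0)
    (hWV : ∀ m m', cov μ (W m) (V m') = 0)
    (hWW : ∀ m m', m ≠ m' → cov μ (W m) (W m') = 0)
    (Z : (Fin M → Matrix (Fin n) (Fin n) ℝ) → Ω → Fin n → ℝ)
    (hZ : ∀ S ω, Z S ω = h (X ω) - ∑ m, (S m).mulVec (V m ω - W m ω)) :
    ∀ S : Fin M → Matrix (Fin n) (Fin n) ℝ,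
      (∀ S' : Fin M → Matrix (Fin n) (Fin n) ℝ,
        (cov μ (Z S) (Z S)).trace ≤ (cov μ (Z S') (Z S')).trace) ↔
      (∀ m, (∑ m', S m' * cov μ (V m') (V m)) + S m * cov μ (W m) (W m) =
        cov μ (fun ω => h (X ω)) (V m)) := by
  intro S
  have hXc : L2v μ (fun ω => h (X ω)) := hL2.l2v
  have hVc : ∀ m, L2v μ (V m) := fun m => (hVL2 m).l2v
  have hWc : ∀ m, L2v μ (W m) := fun m => (hWL2 m).l2v
  have hYc : ∀ m, L2v μ (fun ω => V m ω - W m ω) := by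
    intro m i
    exact (hVc m i).sub (hWc m i)
  have hmulc : ∀ (T : Matrix (Fin n) (Fin n) ℝ) (A : Ω → Fin n → ℝ), L2v μ A →
      L2v μ (fun ω => T.mulVec (A ω)) := by
    intro T A hA i
    have he : (fun ω => T.mulVec (A ω) i) = fun ω => ∑ k, T i k * A ω k := by
      funext ω; simp [Matrix.mulVec, dotProduct]
    rw [he]
    exact memLp_finset_sum Finset.univ fun k _ => (hA k).const_mul (T i k)
  have hBc : ∀ G : Fin M → Matrix (Fin n) (Fin n) ℝ,
      L2v μ (fun ω => ∑ m, (G m).mulVec (V m ω - W m ω)) := by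
    intro G i
    have he : (fun ω => (∑ m, (G m).mulVec (V m ω - W m ω)) i)
        = fun ω => ∑ m, ((G m).mulVec (V m ω - W m ω)) i := by
      funext ω; exact Finset.sum_apply i Finset.univ _
    rw [he]
    exact memLp_finset_sum Finset.univ fun m _ => hmulc (G m) _ (hYc m) i
  have hZc : ∀ G, L2v μ (Z G) := by
    intro G
    have hZG : Z G = fun ω => h (X ω) - ∑ m, (G m).mulVec (V m ω - W m ω) :=
      funext fun ω => hZ G ω
    rw [hZG]
    intro i
    exact (hXc i).sub (hBc G i)
  have covXW : ∀ m', cov μ (fun ω => h (X ω)) (W m') = 0 := by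
    intro m'; rw [← cov_transpose, hWX m', Matrix.transpose_zero]
  have covVW0 : ∀ m' m'', cov μ (V m') (W m'') = 0 := by
    intro m' m''; rw [← cov_transpose, hWV m'' m', Matrix.transpose_zero]
  have covYY : ∀ m' m'', cov μ (fun ω => V m' ω - W m' ω) (fun ω => V m'' ω - W m'' ω)
      = cov μ (V m') (V m'') + (if m' = m'' then cov μ (W m'') (W m'') else 0) := by
    intro m' m''
    rw [cov_sub_left (hVc m') (hWc m') (hYc m''),
        cov_sub_right (hVc m') (hVc m'') (hWc m''),
        cov_sub_right (hWc m') (hVc m'') (hWc m''),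
        covVW0 m' m'', hWV m' m'', sub_zero, zero_sub, sub_neg_eq_add]
    by_cases hcase : m' = m''
    · subst hcase; rw [if_pos rfl]
    · rw [hWW m' m'' hcase, if_neg hcase]
  have covZY : ∀ (G : Fin M → Matrix (Fin n) (Fin n) ℝ) (m : Fin M),
      cov μ (Z G) (fun ω => V m ω - W m ω)
        = cov μ (fun ω => h (X ω)) (V m)
          - ((∑ m', G m' * cov μ (V m') (V m)) + G m * cov μ (W m) (W m)) := by
    intro G m
    have hZG : Z G = fun ω => h (X ω) - ∑ m', (G m').mulVec (V m' ω - W m' ω) :=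
      funext fun ω => hZ G ω
    rw [hZG, cov_sub_left hXc (hBc G) (hYc m),
      cov_sum_left Finset.univ (fun m' ω => (G m').mulVec (V m' ω - W m' ω))
        (fun m' _ => hmulc (G m') _ (hYc m')) (hYc m)]
    have hterm : ∀ m', cov μ (fun ω => (G m').mulVec (V m' ω - W m' ω))
          (fun ω => V m ω - W m ω)
        = G m' * cov μ (V m') (V m)
          + (if m' = m then G m' * cov μ (W m) (W m) else 0) := by
      intro m'
      rw [cov_mulVec_left (G m') (hYc m') (hYc m), covYY m' m, Matrix.mul_add]
      congr 1
      by_cases hcase : m' = m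
      · rw [if_pos hcase, if_pos hcase]
      · rw [if_neg hcase, if_neg hcase, Matrix.mul_zero]
    have covXY : cov μ (fun ω => h (X ω)) (fun ω => V m ω - W m ω)
        = cov μ (fun ω => h (X ω)) (V m) := by
      rw [cov_sub_right hXc (hVc m) (hWc m), covXW m, sub_zero]
    rw [covXY, Finset.sum_congr rfl fun m' _ => hterm m', Finset.sum_add_distrib,
      Finset.sum_ite_eq' Finset.univ m (fun m' => G m' * cov μ (W m) (W m)),
      if_pos (Finset.mem_univ m)]
  have master : ∀ D : Fin M → Matrix (Fin n) (Fin n) ℝ,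
      (cov μ (Z (fun m => S m + D m)) (Z (fun m => S m + D m))).trace
        = (cov μ (Z S) (Z S)).trace
          - 2 * ∑ m, ((cov μ (Z S) (fun ω => V m ω - W m ω)) * (D m)ᵀ).trace
          + (cov μ (fun ω => ∑ m, (D m).mulVec (V m ω - W m ω))
              (fun ω => ∑ m, (D m).mulVec (V m ω - W m ω))).trace := by
    intro D
    have hD : Z (fun m => S m + D m)
        = fun ω => Z S ω - ∑ m, (D m).mulVec (V m ω - W m ω) := by
      funext ω
      rw [hZ _ ω, hZ S ω]
      simp only [Matrix.add_mulVec]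
      rw [Finset.sum_add_distrib]
      abel
    have hZS : L2v μ (Z S) := hZc S
    have hBD : L2v μ (fun ω => ∑ m, (D m).mulVec (V m ω - W m ω)) := hBc D
    have hC : L2v μ (fun ω => Z S ω - ∑ m, (D m).mulVec (V m ω - W m ω)) := by
      rw [← hD]; exact hZc _
    have hcovZB : cov μ (Z S) (fun ω => ∑ m, (D m).mulVec (V m ω - W m ω))
        = ∑ m, cov μ (Z S) (fun ω => V m ω - W m ω) * (D m)ᵀ := by
      rw [cov_sum_right Finset.univ (fun m ω => (D m).mulVec (V m ω - W m ω))
        (fun m _ => hmulc (D m) _ (hYc m)) hZS]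
      exact Finset.sum_congr rfl fun m _ => cov_mulVec_right (D m) hZS (hYc m)
    have hcovBZ : cov μ (fun ω => ∑ m, (D m).mulVec (V m ω - W m ω)) (Z S)
        = (cov μ (Z S) (fun ω => ∑ m, (D m).mulVec (V m ω - W m ω)))ᵀ :=
      (cov_transpose _ _).symm
    rw [hD, cov_sub_left hZS hBD hC, cov_sub_right hZS hZS hBD,
      cov_sub_right hBD hZS hBD, Matrix.trace_sub, Matrix.trace_sub, Matrix.trace_sub,
      hcovBZ, Matrix.trace_transpose, hcovZB, Matrix.trace_sum]
    ring
  constructor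
  · intro hmin m
    obtain ⟨E, hE⟩ : ∃ E, cov μ (Z S) (fun ω => V m ω - W m ω) = E := ⟨_, rfl⟩
    have hEdef : cov μ (fun ω => h (X ω)) (V m)
        - ((∑ m', S m' * cov μ (V m') (V m)) + S m * cov μ (W m) (W m)) = E :=
      (covZY S m).symm.trans hE
    suffices hE0 : E = 0 by
      exact (sub_eq_zero.mp (hEdef.trans hE0)).symm
    have hq0 : 0 ≤ (cov μ (fun ω => E.mulVec (V m ω - W m ω))
        (fun ω => E.mulVec (V m ω - W m ω))).trace := trace_cov_nonneg _
    have H : ∀ t : ℝ, 0 ≤ t ^ 2 * (cov μ (fun ω => E.mulVec (V m ω - W m ω))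
        (fun ω => E.mulVec (V m ω - W m ω))).trace - 2 * t * (E * Eᵀ).trace := by
      intro t
      have h1 := hmin (fun m' => S m' + (if m' = m then t • E else 0))
      have h2 := master (fun m' => if m' = m then t • E else 0)
      have hlin : ∑ m', ((cov μ (Z S) (fun ω => V m' ω - W m' ω)) *
            ((if m' = m then t • E else 0 : Matrix (Fin n) (Fin n) ℝ))ᵀ).trace
          = t * (E * Eᵀ).trace := by
        rw [Finset.sum_eq_single m]
        · rw [if_pos rfl, hE, Matrix.transpose_smul, Matrix.mul_smul, Matrix.trace_smul,
            smul_eq_mul]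
        · intro b _ hb; rw [if_neg hb, Matrix.transpose_zero, Matrix.mul_zero,
            Matrix.trace_zero]
        · intro hm; exact absurd (Finset.mem_univ m) hm
      have hBeq : (fun ω => ∑ m', ((if m' = m then t • E else 0 :
            Matrix (Fin n) (Fin n) ℝ)).mulVec (V m' ω - W m' ω))
          = fun ω => t • (E.mulVec (V m ω - W m ω)) := by
        funext ω
        rw [Finset.sum_eq_single m]
        · rw [if_pos rfl, Matrix.smul_mulVec]
        · intro b _ hb; rw [if_neg hb, Matrix.zero_mulVec]
        · intro hm; exact absurd (Finset.mem_univ m) hm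
      rw [hlin, hBeq, cov_smul_smul t (fun ω => E.mulVec (V m ω - W m ω)),
        Matrix.trace_smul, smul_eq_mul] at h2
      rw [h2] at h1
      have hts : t ^ 2 = t * t := sq t
      rw [hts]
      linarith
    exact matrix_eq_zero_of_trace_mul_transpose (quad_coeff_zero hq0 H)
  · intro heq S'
    have hZ0 : ∀ m, cov μ (Z S) (fun ω => V m ω - W m ω) = 0 := by
      intro m; rw [covZY S m, heq m, sub_self]
    have h2 := master (fun m => S' m - S m)
    have hS' : (fun m => S m + (S' m - S m)) = S' := by
      funext m; abel
    rw [hS'] at h2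
    rw [h2]
    have hlin : ∑ m', ((cov μ (Z S) (fun ω => V m' ω - W m' ω)) * ((S' m' - S m'))ᵀ).trace
        = 0 := by
      refine Finset.sum_eq_zero fun m' _ => ?_
      rw [hZ0 m', Matrix.zero_mul, Matrix.trace_zero]
    rw [hlin]
    have hqn := trace_cov_nonneg (μ := μ)
      (fun ω => ∑ m', (S' m' - S m').mulVec (V m' ω - W m' ω))
    linarith
end
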